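/- Let w : ℝ^{n+1} × (0,∞) → ℝ be smooth and caloric on an open set U ⊆ ℝ^{n+1} × (0,∞) with |∇w(x,t)| ≤ 1 on U, let ε > 0, and let c ≥ 4 be a constant. Then the function tanh(w(x,t)/√t − c) is a sub-solution of the ε-Allen–Cahn equation on {(x,t) ∈ U : w(x,t) > c√t}, i.e. ∂ₜg − Δg + ε⁻² f(g) ≤ 0 there, and the function tanh(w(x,t)/√t + c) is a super-solution on {(x,t) ∈ U : w(x,t) < −c√t}, i.e. ∂ₜg − Δg + ε⁻² f(g) ≥ 0 there, where f(u) = 2u(u²−1). -/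

import Mathlib

open MeasureTheory Set

noncomputable section

/-- `ℝ^{n+1}` as a Euclidean space. -/
abbrev Euc (n : ℕ) := EuclideanSpace ℝ (Fin (n + 1))

/-- The spatial Laplacian: sum of second derivatives in coordinate directions. -/
def lap (n : ℕ) (f : Euc n → ℝ) (x : Euc n) : ℝ :=
  ∑ i : Fin (n + 1),
    fderiv ℝ (fun y => fderiv ℝ f y (EuclideanSpace.single i 1)) x (EuclideanSpace.single i 1)

/-- The Allen–Cahn nonlinearity `f(u) = 2u(u²-1)`, the derivative of `F(u) = ½(1-u²)²`. -/
def acF (u : ℝ) : ℝ := 2 * u * (u ^ 2 - 1)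


lemma my_hasDerivAt_tanh (x : ℝ) : HasDerivAt Real.tanh (1 - Real.tanh x ^ 2) x := by
  have h := (Real.hasDerivAt_sinh x).div (Real.hasDerivAt_cosh x) (Real.cosh_pos x).ne'
  have he : Real.tanh = fun y => Real.sinh y / Real.cosh y :=
    funext fun y => Real.tanh_eq_sinh_div_cosh y
  rw [he]
  refine h.congr_deriv ?_
  have h1 := Real.cosh_sq_sub_sinh_sq x
  have h2 : Real.cosh x ≠ 0 := (Real.cosh_pos x).ne'
  rw [div_pow]
  field_simp

lemma lap_tanh (n : ℕ) (φ : Euc n → ℝ) (V : Set (Euc n)) (hV : IsOpen V) (x : Euc n) (hx : x ∈ V)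
    (hφ : ∀ y ∈ V, ContDiffAt ℝ ((⊤ : ℕ∞) : WithTop ℕ∞) φ y) (b st : ℝ) (hst : 0 < st) :
    lap n (fun y => Real.tanh (φ y / st + b)) x
      = ((1 - Real.tanh (φ x / st + b) ^ 2) / st) * lap n φ x
        - (2 * Real.tanh (φ x / st + b) * (1 - Real.tanh (φ x / st + b) ^ 2) / (st * st))
            * ‖gradient φ x‖ ^ 2 := by
  have hle1 : (1 : WithTop ℕ∞) ≤ ((⊤ : ℕ∞) : WithTop ℕ∞) := by
    exact_mod_cast (le_top : (1 : ℕ∞) ≤ ⊤)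
  have hφd : ∀ y ∈ V, DifferentiableAt ℝ φ y := fun y hy => (hφ y hy).differentiableAt (by simp)
  have hHD : ∀ y ∈ V, HasFDerivAt (fun z => Real.tanh (φ z / st + b))
      (((1 - Real.tanh (φ y / st + b) ^ 2) * st⁻¹) • fderiv ℝ φ y) y := by
    intro y hy
    have h1 : HasFDerivAt (fun z => st⁻¹ * φ z + b) (st⁻¹ • fderiv ℝ φ y) y :=
      (((hφd y hy).hasFDerivAt.const_mul st⁻¹).add_const b)
    have h2 := (my_hasDerivAt_tanh (st⁻¹ * φ y + b)).comp_hasFDerivAt y h1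
    simpa [Function.comp_def, smul_smul, div_eq_inv_mul] using h2
  have hEv : ∀ᶠ y in nhds x, fderiv ℝ (fun z => Real.tanh (φ z / st + b)) y
      = ((1 - Real.tanh (φ y / st + b) ^ 2) * st⁻¹) • fderiv ℝ φ y := by
    filter_upwards [hV.mem_nhds hx] with y hy using (hHD y hy).fderiv
  set T := Real.tanh (φ x / st + b) with hT
  set D := fderiv ℝ φ x with hD
  have h2le : (1 + 1 : WithTop ℕ∞) ≤ ((⊤ : ℕ∞) : WithTop ℕ∞) := by
    rw [one_add_one_eq_two, ← WithTop.coe_ofNat]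
    exact WithTop.coe_le_coe.mpr (le_top : (2 : ℕ∞) ≤ ⊤)
  have hsum : ∀ i : Fin (n + 1),
      fderiv ℝ (fun y => fderiv ℝ (fun z => Real.tanh (φ z / st + b)) y (EuclideanSpace.single i 1)) x
        (EuclideanSpace.single i 1)
      = ((1 - T ^ 2) * st⁻¹) *
          fderiv ℝ (fun y => fderiv ℝ φ y (EuclideanSpace.single i 1)) x (EuclideanSpace.single i 1)
        + (-2 * T * ((1 - T ^ 2) * st⁻¹) * st⁻¹) * (D (EuclideanSpace.single i 1)) ^ 2 := by
    intro i
    have hq : DifferentiableAt ℝ (fun y => fderiv ℝ φ y (EuclideanSpace.single i 1)) x :=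
      (((hφ x hx).fderiv_right h2le).differentiableAt one_ne_zero).clm_apply (differentiableAt_const _)
    have hEv2 : (fun y => fderiv ℝ (fun z => Real.tanh (φ z / st + b)) y (EuclideanSpace.single i 1))
        =ᶠ[nhds x] fun y => ((1 - Real.tanh (φ y / st + b) ^ 2) * st⁻¹)
          * fderiv ℝ φ y (EuclideanSpace.single i 1) := by
      filter_upwards [hEv] with y hy
      rw [hy]; rfl
    rw [hEv2.fderiv_eq]
    have hhx : HasFDerivAt (fun z => Real.tanh (φ z / st + b)) (((1 - T ^ 2) * st⁻¹) • D) x :=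
      hHD x hx
    have hAd : HasFDerivAt (fun y => (1 - Real.tanh (φ y / st + b) ^ 2) * st⁻¹)
        ((-2 * T * ((1 - T ^ 2) * st⁻¹) * st⁻¹) • D) x := by
      have h1 := ((hhx.mul hhx).const_sub 1).mul_const st⁻¹
      have h2 : (fun y => (1 - Real.tanh (φ y / st + b) ^ 2) * st⁻¹)
          = fun y => (1 - Real.tanh (φ y / st + b) * Real.tanh (φ y / st + b)) * st⁻¹ := by
        funext y; rw [pow_two]
      rw [h2]
      refine h1.congr_fderiv ?_
      module
    have hprod := hAd.mul hq.hasFDerivAt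
    simp only [Pi.mul_def] at hprod
    rw [hprod.fderiv]
    simp only [ContinuousLinearMap.add_apply, ContinuousLinearMap.smul_apply, smul_eq_mul]
    ring
  have hS : ∑ i : Fin (n + 1), (D (EuclideanSpace.single i 1)) ^ 2 = ‖gradient φ x‖ ^ 2 := by
    have hgx := (hφd x hx).hasGradientAt
    have hfd := hasGradientAt_iff_hasFDerivAt.mp hgx
    have hDg : D = InnerProductSpace.toDual ℝ (Euc n) (gradient φ x) := by
      rw [hD]; exact hfd.fderiv
    have hDi : ∀ i : Fin (n + 1), D (EuclideanSpace.single i 1) = gradient φ x i := by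
      intro i
      rw [hDg, InnerProductSpace.toDual_apply_apply, EuclideanSpace.inner_single_right]
      simp
    simp only [hDi]
    rw [EuclideanSpace.norm_eq, Real.sq_sqrt (by positivity)]
    simp [sq_abs]
  calc lap n (fun y => Real.tanh (φ y / st + b)) x
      = ∑ i : Fin (n + 1), (((1 - T ^ 2) * st⁻¹) *
          fderiv ℝ (fun y => fderiv ℝ φ y (EuclideanSpace.single i 1)) x (EuclideanSpace.single i 1)
        + (-2 * T * ((1 - T ^ 2) * st⁻¹) * st⁻¹) * (D (EuclideanSpace.single i 1)) ^ 2) := by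
        unfold lap
        exact Finset.sum_congr rfl fun i _ => hsum i
    _ = ((1 - T ^ 2) * st⁻¹) * lap n φ x
        + (-2 * T * ((1 - T ^ 2) * st⁻¹) * st⁻¹) * ∑ i : Fin (n + 1), (D (EuclideanSpace.single i 1)) ^ 2 := by
        rw [Finset.sum_add_distrib, ← Finset.mul_sum, ← Finset.mul_sum]
        rfl
    _ = ((1 - T ^ 2) / st) * lap n φ x
        - (2 * T * (1 - T ^ 2) / (st * st)) * ‖gradient φ x‖ ^ 2 := by
        rw [hS]
        field_simp
        ring


lemma my_deriv_tanh_time (ψ : ℝ → ℝ) (t : ℝ) (ht : 0 < t) (hψ : DifferentiableAt ℝ ψ t) (b : ℝ) :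
    deriv (fun s => Real.tanh (ψ s / Real.sqrt s + b)) t
      = (1 - Real.tanh (ψ t / Real.sqrt t + b) ^ 2)
          * (deriv ψ t / Real.sqrt t - ψ t / (2 * t * Real.sqrt t)) := by
  have hst : 0 < Real.sqrt t := Real.sqrt_pos.mpr ht
  have hm : Real.sqrt t * Real.sqrt t = t := Real.mul_self_sqrt ht.le
  have h2 : HasDerivAt Real.sqrt (1 / (2 * Real.sqrt t)) t := Real.hasDerivAt_sqrt ht.ne'
  have h3 := (hψ.hasDerivAt.div h2 hst.ne').add_const b
  have h4 := (my_hasDerivAt_tanh (ψ t / Real.sqrt t + b)).comp t h3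
  have h5 : HasDerivAt (fun s => Real.tanh (ψ s / Real.sqrt s + b))
      ((1 - Real.tanh (ψ t / Real.sqrt t + b) ^ 2)
        * ((deriv ψ t * Real.sqrt t - ψ t * (1 / (2 * Real.sqrt t))) / Real.sqrt t ^ 2)) t := h4
  rw [h5.deriv]
  have hst' : Real.sqrt t ≠ 0 := hst.ne'
  set K := Real.tanh (ψ t / Real.sqrt t + b) with hK
  field_simp
  linear_combination (-4 * K ^ 2 * deriv ψ t * t ^ 2 - K ^ 2 * ψ t + 4 * deriv ψ t * t ^ 2 + ψ t - 4 * K ^ 2 * deriv ψ t * t * Real.sqrt t ^ 2 + 4 * deriv ψ t * t * Real.sqrt t ^ 2 + (4 * K ^ 2 * deriv ψ t * t - 4 * deriv ψ t * t) * (Real.sqrt t ^ 2 + t)) * hm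
lemma my_tanh_lt_one (x : ℝ) : Real.tanh x < 1 := by
  rw [Real.tanh_eq_sinh_div_cosh, div_lt_one (Real.cosh_pos x)]
  have := Real.cosh_sub_sinh x
  have := Real.exp_pos (-x)
  linarith

lemma my_neg_one_lt_tanh (x : ℝ) : -1 < Real.tanh x := by
  rw [Real.tanh_eq_sinh_div_cosh, lt_div_iff₀ (Real.cosh_pos x)]
  have := Real.cosh_add_sinh x
  have := Real.exp_pos x
  linarith

lemma my_tanh_nonneg {x : ℝ} (hx : 0 ≤ x) : 0 ≤ Real.tanh x := by
  rw [Real.tanh_eq_sinh_div_cosh]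
  exact div_nonneg (Real.sinh_nonneg_iff.mpr hx) (Real.cosh_pos x).le

lemma my_tanh_nonpos {x : ℝ} (hx : x ≤ 0) : Real.tanh x ≤ 0 := by
  have : 0 ≤ Real.tanh (-x) := my_tanh_nonneg (by linarith)
  rw [Real.tanh_neg] at this
  linarith

lemma key (n : ℕ) (w : Euc n × ℝ → ℝ) (U : Set (Euc n × ℝ))
    (hUopen : IsOpen U) (hUt : ∀ p ∈ U, 0 < p.2)
    (hsmooth : ContDiffOn ℝ ((⊤ : ℕ∞) : WithTop ℕ∞) w U)
    (hcaloric : ∀ p ∈ U, deriv (fun s => w (p.1, s)) p.2 = lap n (fun y => w (y, p.2)) p.1)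
    (a : ℝ) (p : Euc n × ℝ) (hp : p ∈ U) :
    deriv (fun s => Real.tanh (w (p.1, s) / Real.sqrt s + a)) p.2
      - lap n (fun y => Real.tanh (w (y, p.2) / Real.sqrt p.2 + a)) p.1
    = (1 - Real.tanh (w p / Real.sqrt p.2 + a) ^ 2) * (-(w p) / (2 * p.2 * Real.sqrt p.2))
      + 2 * Real.tanh (w p / Real.sqrt p.2 + a) * (1 - Real.tanh (w p / Real.sqrt p.2 + a) ^ 2)
        * (‖gradient (fun y => w (y, p.2)) p.1‖ ^ 2 / p.2) := by
  obtain ⟨x, t⟩ := p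
  have ht : 0 < t := hUt (x, t) hp
  have hst : 0 < Real.sqrt t := Real.sqrt_pos.mpr ht
  have hm : Real.sqrt t * Real.sqrt t = t := Real.mul_self_sqrt ht.le
  have hV : IsOpen {y : Euc n | (y, t) ∈ U} := by
    have hco : Continuous fun y : Euc n => (y, t) := continuous_id.prodMk continuous_const
    exact hUopen.preimage hco
  have hφ : ∀ y ∈ {y : Euc n | (y, t) ∈ U},
      ContDiffAt ℝ ((⊤ : ℕ∞) : WithTop ℕ∞) (fun y => w (y, t)) y := by
    intro y hy
    exact (hsmooth.contDiffAt (hUopen.mem_nhds hy)).comp y (contDiff_prodMk_left t).contDiffAt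
  have hle1 : (1 : WithTop ℕ∞) ≤ ((⊤ : ℕ∞) : WithTop ℕ∞) := by
    exact_mod_cast (le_top : (1 : ℕ∞) ≤ ⊤)
  have hlap := lap_tanh n (fun y => w (y, t)) {y : Euc n | (y, t) ∈ U} hV x hp hφ a
    (Real.sqrt t) hst
  have hψ : DifferentiableAt ℝ (fun s => w (x, s)) t := by
    have h1 : ContDiffAt ℝ ((⊤ : ℕ∞) : WithTop ℕ∞) (fun s : ℝ => w (x, s)) t :=
      (hsmooth.contDiffAt (hUopen.mem_nhds hp)).comp t (contDiff_prodMk_right x).contDiffAt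
    exact h1.differentiableAt (by simp)
  have htime := my_deriv_tanh_time (fun s => w (x, s)) t ht hψ a
  have hcal : deriv (fun s => w (x, s)) t = lap n (fun y => w (y, t)) x := hcaloric (x, t) hp
  simp only at htime hlap hcal ⊢
  rw [htime, hlap, hcal, hm]
  ring

set_option maxHeartbeats 1000000 in
theorem stmt6 (n : ℕ) (w : Euc n × ℝ → ℝ) (U : Set (Euc n × ℝ))
    (hUopen : IsOpen U) (hUt : ∀ p ∈ U, 0 < p.2)
    (hsmooth : ContDiffOn ℝ ((⊤ : ℕ∞) : WithTop ℕ∞) w U)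
    (hcaloric : ∀ p ∈ U, deriv (fun s => w (p.1, s)) p.2 = lap n (fun y => w (y, p.2)) p.1)
    (hgrad : ∀ p ∈ U, ‖gradient (fun y => w (y, p.2)) p.1‖ ≤ 1)
    (ε : ℝ) (hε : 0 < ε) (c : ℝ) (hc : 4 ≤ c) :
    (∀ p ∈ U, c * Real.sqrt p.2 < w p →
      deriv (fun s => Real.tanh (w (p.1, s) / Real.sqrt s - c)) p.2
          - lap n (fun y => Real.tanh (w (y, p.2) / Real.sqrt p.2 - c)) p.1
          + (ε ^ 2)⁻¹ * acF (Real.tanh (w p / Real.sqrt p.2 - c)) ≤ 0) ∧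
    (∀ p ∈ U, w p < -(c * Real.sqrt p.2) →
      0 ≤ deriv (fun s => Real.tanh (w (p.1, s) / Real.sqrt s + c)) p.2
          - lap n (fun y => Real.tanh (w (y, p.2) / Real.sqrt p.2 + c)) p.1
          + (ε ^ 2)⁻¹ * acF (Real.tanh (w p / Real.sqrt p.2 + c))) := by
  constructor
  · intro p hp hwp
    have ht : 0 < p.2 := hUt p hp
    have hst : 0 < Real.sqrt p.2 := Real.sqrt_pos.mpr ht
    have hm : Real.sqrt p.2 * Real.sqrt p.2 = p.2 := Real.mul_self_sqrt ht.le
    have heq := key n w U hUopen hUt hsmooth hcaloric (-c) p hp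
    have hfun1 : (fun s => Real.tanh (w (p.1, s) / Real.sqrt s - c))
        = fun s => Real.tanh (w (p.1, s) / Real.sqrt s + (-c)) := by
      funext s; rw [sub_eq_add_neg]
    have hfun2 : (fun y => Real.tanh (w (y, p.2) / Real.sqrt p.2 - c))
        = fun y => Real.tanh (w (y, p.2) / Real.sqrt p.2 + (-c)) := by
      funext y; rw [sub_eq_add_neg]
    rw [hfun1, hfun2, show w p / Real.sqrt p.2 - c = w p / Real.sqrt p.2 + (-c) from
      sub_eq_add_neg _ _, heq]
    set T := Real.tanh (w p / Real.sqrt p.2 + (-c)) with hTdef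
    set G := ‖gradient (fun y => w (y, p.2)) p.1‖ with hGdef
    have hG1 : G ≤ 1 := hgrad p hp
    have hG0 : 0 ≤ G := norm_nonneg _
    have hT1 : T < 1 := my_tanh_lt_one _
    have hTn : -1 < T := my_neg_one_lt_tanh _
    have hT0 : 0 ≤ T := by
      apply my_tanh_nonneg
      have h1 : c < w p / Real.sqrt p.2 := (lt_div_iff₀ hst).mpr (by linarith [hwp])
      linarith
    have hP : 0 ≤ 1 - T ^ 2 := by nlinarith
    have h1 : 2 / p.2 ≤ w p / (2 * p.2 * Real.sqrt p.2) := by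
      rw [div_le_div_iff₀ ht (by positivity)]
      have hA : 4 * Real.sqrt p.2 * p.2 ≤ c * Real.sqrt p.2 * p.2 :=
        mul_le_mul_of_nonneg_right (mul_le_mul_of_nonneg_right hc hst.le) ht.le
      have hB : c * Real.sqrt p.2 * p.2 ≤ w p * p.2 :=
        mul_le_mul_of_nonneg_right hwp.le ht.le
      linarith
    have hεpos : 0 < ((ε : ℝ) ^ 2)⁻¹ := by positivity
    have e1 : (1 - T ^ 2) * (-(w p) / (2 * p.2 * Real.sqrt p.2)) ≤ (1 - T ^ 2) * (-(2 / p.2)) := by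
      apply mul_le_mul_of_nonneg_left _ hP
      rw [neg_div]
      exact neg_le_neg h1
    have e2 : 2 * T * (1 - T ^ 2) * (G ^ 2 / p.2) ≤ (1 - T ^ 2) * (2 / p.2) := by
      have hb : T * G ^ 2 ≤ 1 := by nlinarith
      have hc2 : (0 : ℝ) ≤ (1 - T ^ 2) * (2 / p.2) := by positivity
      calc 2 * T * (1 - T ^ 2) * (G ^ 2 / p.2) = (1 - T ^ 2) * (2 / p.2) * (T * G ^ 2) := by ring
        _ ≤ (1 - T ^ 2) * (2 / p.2) * 1 := by
            exact mul_le_mul_of_nonneg_left hb hc2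
        _ = (1 - T ^ 2) * (2 / p.2) := by ring
    have e3 : (ε ^ 2)⁻¹ * acF T ≤ 0 := by
      unfold acF
      nlinarith [mul_nonneg hεpos.le (mul_nonneg hT0 hP)]
    linarith
  · intro p hp hwp
    have ht : 0 < p.2 := hUt p hp
    have hst : 0 < Real.sqrt p.2 := Real.sqrt_pos.mpr ht
    have hm : Real.sqrt p.2 * Real.sqrt p.2 = p.2 := Real.mul_self_sqrt ht.le
    have heq := key n w U hUopen hUt hsmooth hcaloric c p hp
    rw [heq]
    set T := Real.tanh (w p / Real.sqrt p.2 + c) with hTdef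
    set G := ‖gradient (fun y => w (y, p.2)) p.1‖ with hGdef
    have hG1 : G ≤ 1 := hgrad p hp
    have hG0 : 0 ≤ G := norm_nonneg _
    have hT1 : T < 1 := my_tanh_lt_one _
    have hTn : -1 < T := my_neg_one_lt_tanh _
    have hT0 : T ≤ 0 := by
      apply my_tanh_nonpos
      have h1 : w p / Real.sqrt p.2 < -c := (div_lt_iff₀ hst).mpr (by nlinarith [hwp])
      linarith
    have hP : 0 ≤ 1 - T ^ 2 := by nlinarith
    have h1 : 2 / p.2 ≤ -(w p) / (2 * p.2 * Real.sqrt p.2) := by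
      rw [div_le_div_iff₀ ht (by positivity)]
      have hA : 4 * Real.sqrt p.2 * p.2 ≤ c * Real.sqrt p.2 * p.2 :=
        mul_le_mul_of_nonneg_right (mul_le_mul_of_nonneg_right hc hst.le) ht.le
      have hB : c * Real.sqrt p.2 * p.2 ≤ -(w p) * p.2 :=
        mul_le_mul_of_nonneg_right (by linarith) ht.le
      linarith
    have hεpos : 0 < ((ε : ℝ) ^ 2)⁻¹ := by positivity
    have e1 : (1 - T ^ 2) * (2 / p.2) ≤ (1 - T ^ 2) * (-(w p) / (2 * p.2 * Real.sqrt p.2)) :=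
      mul_le_mul_of_nonneg_left h1 hP
    have e2 : -((1 - T ^ 2) * (2 / p.2)) ≤ 2 * T * (1 - T ^ 2) * (G ^ 2 / p.2) := by
      have hb : -1 ≤ T * G ^ 2 := by nlinarith
      have hc2 : (0 : ℝ) ≤ (1 - T ^ 2) * (2 / p.2) := by positivity
      calc -((1 - T ^ 2) * (2 / p.2)) = (1 - T ^ 2) * (2 / p.2) * (-1) := by ring
        _ ≤ (1 - T ^ 2) * (2 / p.2) * (T * G ^ 2) := mul_le_mul_of_nonneg_left hb hc2
        _ = 2 * T * (1 - T ^ 2) * (G ^ 2 / p.2) := by ring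
    have e3 : 0 ≤ (ε ^ 2)⁻¹ * acF T := by
      unfold acF
      nlinarith [mul_nonneg hεpos.le (mul_nonneg (by linarith : (0:ℝ) ≤ -T) hP)]
    linarith

end
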